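/- Let (R, m) be a *local graded commutative Noetherian ring with condition (P) and depth(m, R) = 0. If M is a finitely generated graded R-module with Hom_R(M, R) = 0, then M = 0. -/

import Mathlib

open CategoryTheory

noncomputable section

abbrev extGrp (R : Type) [CommRing R] (k : ℕ) (M N : ModuleCat R) : ModuleCat R :=
  ((Ext R (ModuleCat R) k).obj (Opposite.op M)).obj N

def mGrade (R : Type) [CommRing R] (M : ModuleCat R) : ℕ∞ :=
  sInf {n : ℕ∞ | ∃ k : ℕ, n = k ∧ Nontrivial (extGrp R k M (ModuleCat.of R R))}

def TotRefl (R : Type) [CommRing R] (M : ModuleCat R) : Prop :=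
  Function.Bijective (Module.Dual.eval R M) ∧
  (∀ k : ℕ, 0 < k → Subsingleton (extGrp R k M (ModuleCat.of R R))) ∧
  (∀ k : ℕ, 0 < k → Subsingleton (extGrp R k (ModuleCat.of R (Module.Dual R M)) (ModuleCat.of R R)))

def GdimLE (R : Type) [CommRing R] : ℕ → ModuleCat R → Prop
  | 0, M => TotRefl R M
  | (n+1), M => ∃ (G : ModuleCat R) (f : G →ₗ[R] M),
      Function.Surjective f ∧ TotRefl R G ∧ GdimLE R n (ModuleCat.of R (LinearMap.ker f))

def FinGdim (R : Type) [CommRing R] (M : ModuleCat R) : Prop := ∃ n, GdimLE R n M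

def Gdim (R : Type) [CommRing R] (M : ModuleCat R) : ℕ∞ :=
  sInf {n : ℕ∞ | ∃ k : ℕ, n = k ∧ GdimLE R k M}

def mDepth (R : Type) [CommRing R] (I : Ideal R) (M : Type) [AddCommGroup M] [Module R M] : ℕ∞ :=
  sSup {n : ℕ∞ | ∃ rs : List R, (∀ x ∈ rs, x ∈ I) ∧ RingTheory.Sequence.IsRegular M rs ∧ n = rs.length}

/-- `I` is a `*`maximal (graded) ideal. -/
def IsStarMaximal (R : Type) [CommRing R] (𝒜 : ℤ → AddSubgroup R) [GradedRing 𝒜]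
    (I : Ideal R) : Prop :=
  Ideal.IsHomogeneous 𝒜 I ∧ I ≠ ⊤ ∧
    ∀ J : Ideal R, Ideal.IsHomogeneous 𝒜 J → J ≠ ⊤ → I ≤ J → I = J

/-- `(R, m)` is a `*`local graded ring: `m` is the unique `*`maximal graded ideal. -/
def IsStarLocal (R : Type) [CommRing R] (𝒜 : ℤ → AddSubgroup R) [GradedRing 𝒜]
    (m : Ideal R) : Prop :=
  IsStarMaximal R 𝒜 m ∧ ∀ I : Ideal R, IsStarMaximal R 𝒜 I → I = m

/-- Condition (P): every graded prime `p ≠ m` misses a homogeneous element of positive degree. -/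
def ConditionP (R : Type) [CommRing R] (𝒜 : ℤ → AddSubgroup R) [GradedRing 𝒜]
    (m : Ideal R) : Prop :=
  ∀ p : Ideal R, p.IsPrime → Ideal.IsHomogeneous 𝒜 p → p ≠ m →
    ∃ i : ℤ, 0 < i ∧ ∃ r ∈ 𝒜 i, r ∉ p

/-- `R` has finite self-injective dimension. -/
def FinInjDim (R : Type) [CommRing R] : Prop :=
  ∃ n : ℕ, ∀ (N : ModuleCat R) (k : ℕ), n < k → Subsingleton (extGrp R k N (ModuleCat.of R R))

/-- `R` is Gorenstein: every localization at a prime has finite self-injective dimension. -/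
def IsGorensteinRing (R : Type) [CommRing R] : Prop :=
  ∀ (p : Ideal R) [p.IsPrime], FinInjDim (Localization.AtPrime p)

/-- A Noetherian local ring is Cohen–Macaulay if depth = dimension. -/
def IsCMLocalRing (R : Type) [CommRing R] [IsLocalRing R] : Prop :=
  (mDepth R (IsLocalRing.maximalIdeal R) R : WithBot ℕ∞) = ringKrullDim R

/-- `R` is a Cohen–Macaulay ring: all localizations at primes are Cohen–Macaulay local rings. -/
def IsCMRing (R : Type) [CommRing R] : Prop :=
  ∀ (p : Ideal R) [p.IsPrime], IsCMLocalRing (Localization.AtPrime p)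

/-- `M` is a Cohen–Macaulay module: for each prime in the support,
the localized module is Cohen–Macaulay (local depth = local dimension). -/
def IsCMModule (R : Type) [CommRing R] (M : Type) [AddCommGroup M] [Module R M] : Prop :=
  ∀ p : PrimeSpectrum R, p ∈ Module.support R M →
    (mDepth (Localization.AtPrime p.asIdeal)
        (IsLocalRing.maximalIdeal (Localization.AtPrime p.asIdeal))
        (LocalizedModule p.asIdeal.primeCompl M) : WithBot ℕ∞)
      = ringKrullDim ((Localization.AtPrime p.asIdeal) ⧸
          Module.annihilator (Localization.AtPrime p.asIdeal)
            (LocalizedModule p.asIdeal.primeCompl M))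

/-- The height of an ideal: the infimum of heights of primes containing it. -/
def idealHeight (R : Type) [CommRing R] (I : Ideal R) : ℕ∞ :=
  ⨅ (p : PrimeSpectrum R) (_ : I ≤ p.asIdeal), Order.height p

section AuxStmt8


variable {R : Type} [CommRing R]

lemma assPrimes_subset_union [IsNoetherianRing R] {M : Type} [AddCommGroup M] [Module R M] (W : Submodule R M) :
    associatedPrimes R M ⊆ associatedPrimes R W ∪ associatedPrimes R (M ⧸ W) := by
  rintro p hp'
  obtain ⟨hp, x, hx⟩ := isAssociatedPrime_iff.mp hp'
  have hmem : ∀ a : R, a ∈ p ↔ a • x = 0 := by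
    intro a; rw [hx, Submodule.mem_colon_singleton, Submodule.mem_bot]
  by_cases hcase : ∃ r : R, r • x ∈ W ∧ r • x ≠ 0
  · obtain ⟨r, hrW, hr0⟩ := hcase
    have hrp : r ∉ p := fun hrp => hr0 ((hmem r).mp hrp)
    left
    refine isAssociatedPrime_iff.mpr ⟨hp, ⟨r • x, hrW⟩, ?_⟩
    ext a
    rw [Submodule.mem_colon_singleton, Submodule.mem_bot]
    constructor
    · intro ha
      ext
      show a • (r • x) = 0
      rw [smul_comm, (hmem a).mp ha, smul_zero]
    · intro ha
      have h1 : a • (r • x) = 0 := congrArg Subtype.val ha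
      have h2 : (a * r) • x = 0 := by rw [mul_smul]; exact h1
      rcases hp.mem_or_mem ((hmem (a * r)).mpr h2) with h | h
      · exact h
      · exact absurd h hrp
  · push_neg at hcase
    right
    refine isAssociatedPrime_iff.mpr ⟨hp, W.mkQ x, ?_⟩
    ext a
    rw [Submodule.mem_colon_singleton, Submodule.mem_bot]
    have key : a • W.mkQ x = W.mkQ (a • x) := (map_smul W.mkQ a x).symm
    constructor
    · intro ha
      rw [key, (hmem a).mp ha, map_zero]
    · intro ha
      rw [key] at ha
      exact (hmem a).mpr (hcase a ((Submodule.Quotient.mk_eq_zero W).mp ha))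

lemma assPrimes_quot_finite [IsNoetherianRing R] {M : Type} [AddCommGroup M] [Module R M]
    [IsNoetherian R M] (N : Submodule R M) : (associatedPrimes R (M ⧸ N)).Finite := by
  induction N using IsNoetherian.induction with
  | _ N ih =>
    by_cases htop : N = ⊤
    · subst htop
      haveI : Subsingleton (M ⧸ (⊤ : Submodule R M)) :=
        Submodule.Quotient.subsingleton_iff.mpr rfl
      rw [associatedPrimes.eq_empty_of_subsingleton]
      exact Set.finite_empty
    · have hnt : Nontrivial (M ⧸ N) := Submodule.Quotient.nontrivial_iff.mpr htop
      obtain ⟨P, hP⟩ := associatedPrimes.nonempty R (M ⧸ N)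
      obtain ⟨hPp, z, hz⟩ := isAssociatedPrime_iff.mp hP
      obtain ⟨y, rfl⟩ := N.mkQ_surjective z
      have hy : y ∉ N := by
        intro hy
        have : N.mkQ y = 0 := (Submodule.Quotient.mk_eq_zero N).mpr hy
        rw [this] at hz
        apply hPp.ne_top
        rw [hz]
        ext a
        simp [Submodule.mem_colon_singleton]
      set N' : Submodule R M := N ⊔ Submodule.span R {y} with hN'
      have hlt : N < N' := by
        refine lt_of_le_of_ne le_sup_left ?_
        intro hEq
        exact hy (hEq ▸ (le_sup_right : Submodule.span R {y} ≤ N') (Submodule.mem_span_singleton_self y))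
      -- W := image of N' in M ⧸ N equals span of mkQ y
      have hmap : N'.map N.mkQ = Submodule.span R {N.mkQ y} := by
        rw [hN', Submodule.map_sup, Submodule.map_span, Set.image_singleton,
          Submodule.mkQ_map_self, bot_sup_eq]
      -- the submodule W of M ⧸ N
      set W : Submodule R (M ⧸ N) := Submodule.span R {N.mkQ y} with hW
      have hsub := assPrimes_subset_union (R := R) (M := M ⧸ N) W
      -- Ass W ⊆ {P}
      have hker : LinearMap.ker (LinearMap.toSpanSingleton R (M ⧸ N) (N.mkQ y)) = P := by
        ext a
        simp only [LinearMap.mem_ker, LinearMap.toSpanSingleton_apply]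
        rw [hz, Submodule.mem_colon_singleton, Submodule.mem_bot]
      have e : (R ⧸ P) ≃ₗ[R] W := by
        rw [← hker]
        exact (LinearMap.quotKerEquivRange _).trans
          (LinearEquiv.ofEq _ _ (LinearMap.span_singleton_eq_range R (M ⧸ N) (N.mkQ y)).symm)
      have hWiso : (associatedPrimes R W) ⊆ {P} := by
        rw [← LinearEquiv.AssociatedPrimes.eq e,
          associatedPrimes.eq_singleton_of_isPrimary hPp.isPrimary, hPp.radical]
      have hQiso : associatedPrimes R ((M ⧸ N) ⧸ W) = associatedPrimes R (M ⧸ N') := by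
        have e0 := Submodule.quotientQuotientEquivQuotient N N' hlt.le
        rw [hmap] at e0
        exact LinearEquiv.AssociatedPrimes.eq e0
      refine Set.Finite.subset ?_ hsub
      refine Set.Finite.union (Set.Finite.subset (Set.finite_singleton P) hWiso) ?_
      rw [hQiso]
      exact ih N' hlt

lemma exists_socle [IsNoetherianRing R] [Nontrivial R] (m : Ideal R) (hm : m ≠ ⊤)
    (hzd : ∀ x ∈ m, ∃ y : R, y ≠ 0 ∧ x * y = 0) :
    ∃ s : R, s ≠ 0 ∧ ∀ a ∈ m, a * s = 0 := by
  have hfin : (associatedPrimes R R).Finite := by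
    have := assPrimes_quot_finite (R := R) (M := R) ⊥
    have e : (R ⧸ (⊥ : Submodule R R)) ≃ₗ[R] R := Submodule.quotEquivOfEqBot ⊥ rfl
    rwa [LinearEquiv.AssociatedPrimes.eq e] at this
  classical
  have hsubU : (m : Set R) ⊆ ⋃ p ∈ hfin.toFinset, (id p : Ideal R) := by
    intro x hx
    have hx' : x ∈ { r : R | ∃ y : R, y ≠ 0 ∧ r • y = 0 } := by
      obtain ⟨y, hy0, hxy⟩ := hzd x hx
      exact ⟨y, hy0, hxy⟩
    rw [← biUnion_associatedPrimes_eq_zero_divisors R R] at hx'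
    obtain ⟨p, hp1, hp2⟩ := Set.mem_iUnion₂.mp hx'
    exact Set.mem_biUnion (hfin.mem_toFinset.mpr hp1) hp2
  have hp : ∀ p ∈ hfin.toFinset, p ≠ (⊥ : Ideal R) → p ≠ (⊥ : Ideal R) → (id p : Ideal R).IsPrime := by
    intro p hpmem _ _
    exact ((hfin.mem_toFinset).mp hpmem).isPrime
  obtain ⟨p, hpmem, hple⟩ := (Ideal.subset_union_prime (⊥ : Ideal R) (⊥ : Ideal R) hp).mp
    (by simpa using hsubU)
  obtain ⟨hpp, s, hs⟩ := isAssociatedPrime_iff.mp ((hfin.mem_toFinset).mp hpmem)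
  refine ⟨s, ?_, ?_⟩
  · intro h0
    apply hpp.ne_top
    rw [hs, h0, eq_top_iff]
    intro a _
    rw [Submodule.mem_colon_singleton, Submodule.mem_bot, smul_zero]
  · intro a ha
    have : a ∈ p := hple ha
    rw [hs, Submodule.mem_colon_singleton, Submodule.mem_bot] at this
    exact this

section Graded

variable (𝒜 : ℤ → AddSubgroup R) [GradedRing 𝒜]
variable {M : Type} [AddCommGroup M] [Module R M]
variable (ℳ : ℤ → AddSubgroup M) [SetLike.GradedSMul 𝒜 ℳ] [DirectSum.Decomposition ℳ]

/-- A submodule is homogeneous if it contains the components of its elements. -/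
def SubmoduleIsHomog (N : Submodule R M) : Prop :=
  ∀ (i : ℤ) (x : M), x ∈ N → ((DirectSum.decompose ℳ x i : ℳ i) : M) ∈ N

lemma decompose_smul_homog (a : R) {d : ℤ} {w : M} (hw : w ∈ ℳ d) (j : ℤ) :
    ((DirectSum.decompose ℳ (a • w) (j + d) : ℳ (j + d)) : M)
      = ((DirectSum.decompose 𝒜 a j : 𝒜 j) : R) • w := by
  induction a using DirectSum.Decomposition.inductionOn 𝒜 with
  | zero => simp
  | @homogeneous k a =>
      have hmem : ((a : R) • w) ∈ ℳ (k + d) := by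
        simpa [vadd_eq_add] using SetLike.GradedSMul.smul_mem a.2 hw
      by_cases hkj : k = j
      · subst hkj
        rw [DirectSum.decompose_of_mem_same ℳ hmem, DirectSum.decompose_of_mem_same 𝒜 a.2]
      · rw [DirectSum.decompose_of_mem_ne ℳ hmem (by omega : k + d ≠ j + d),
          DirectSum.decompose_of_mem_ne 𝒜 a.2 hkj]
        simp
  | add a b ha hb =>
      rw [add_smul, DirectSum.decompose_add, DirectSum.decompose_add]
      push_cast [DirectSum.add_apply]
      rw [ha, hb, add_smul]

lemma homog_sup {N N' : Submodule R M} (hN : SubmoduleIsHomog ℳ N)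
    (hN' : SubmoduleIsHomog ℳ N') : SubmoduleIsHomog ℳ (N ⊔ N') := by
  intro i x hx
  obtain ⟨y, hy, z, hz, rfl⟩ := Submodule.mem_sup.mp hx
  rw [DirectSum.decompose_add]
  push_cast [DirectSum.add_apply]
  exact Submodule.mem_sup.mpr ⟨_, hN i y hy, _, hN' i z hz, rfl⟩

lemma homog_span_singleton (𝒜 : ℤ → AddSubgroup R) [GradedRing 𝒜] [SetLike.GradedSMul 𝒜 ℳ] {d : ℤ} {w : M} (hw : w ∈ ℳ d) :
    SubmoduleIsHomog ℳ (Submodule.span R {w}) := by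
  intro i x hx
  obtain ⟨a, rfl⟩ := Submodule.mem_span_singleton.mp hx
  have := decompose_smul_homog 𝒜 ℳ a hw (i - d)
  rw [sub_add_cancel] at this
  rw [this]
  exact Submodule.smul_mem _ _ (Submodule.mem_span_singleton_self w)

lemma exists_homog_not_mem {N : Submodule R M} (hN : SubmoduleIsHomog ℳ N)
    {x : M} (hx : x ∉ N) :
    ∃ (d : ℤ) (w : M), w ∈ ℳ d ∧ w ∉ N := by
  by_contra hcon
  push_neg at hcon
  apply hx
  classical
  rw [← DirectSum.sum_support_decompose ℳ x]
  exact Submodule.sum_mem _ fun i _ => hcon i _ (SetLike.coe_mem _)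

lemma homog_comap_ideal {N : Submodule R M} (hN : SubmoduleIsHomog ℳ N)
    {d : ℤ} {w : M} (hw : w ∈ ℳ d) :
    Ideal.IsHomogeneous 𝒜 (Submodule.comap (LinearMap.toSpanSingleton R M w) N) := by
  intro j a ha
  have haw : a • w ∈ N := ha
  have := decompose_smul_homog 𝒜 ℳ a hw j
  have hcomp : ((DirectSum.decompose 𝒜 a j : 𝒜 j) : R) • w ∈ N := by
    rw [← this]
    exact hN (j + d) _ haw
  exact hcomp

/-- Every proper homogeneous ideal is contained in some ideal maximal among
proper homogeneous ideals, assuming Noetherianity. -/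
lemma proper_homog_le_star_max [IsNoetherianRing R] {I : Ideal R}
    (hI : Ideal.IsHomogeneous 𝒜 I) (hItop : I ≠ ⊤) :
    ∃ J : Ideal R, Ideal.IsHomogeneous 𝒜 J ∧ J ≠ ⊤ ∧ I ≤ J ∧
      (∀ K : Ideal R, Ideal.IsHomogeneous 𝒜 K → K ≠ ⊤ → J ≤ K → J = K) := by
  have hno : IsNoetherian R R := by infer_instance
  obtain ⟨J, hJmem, hJmax⟩ := (set_has_maximal_iff_noetherian.mpr hno)
    {J : Submodule R R | Ideal.IsHomogeneous 𝒜 J ∧ J ≠ ⊤ ∧ I ≤ J} ⟨I, hI, hItop, le_rfl⟩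
  obtain ⟨hJh, hJt, hIJ⟩ := hJmem
  refine ⟨J, hJh, hJt, hIJ, fun K hKh hKt hJK => ?_⟩
  by_contra hne
  exact hJmax K ⟨hKh, hKt, hIJ.trans hJK⟩ (lt_of_le_of_ne hJK hne)

end Graded


end AuxStmt8

/-- Let `(R, m)` be a `*`local graded commutative Noetherian ring with condition (P) and
`depth(m, R) = 0`.  If `M` is a finite graded `R`-module with `Hom_R(M, R) = 0`,
then `M = 0`. -/
theorem stmt8 (R : Type) [CommRing R] [IsNoetherianRing R]
    (𝒜 : ℤ → AddSubgroup R) [GradedRing 𝒜] (m : Ideal R)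
    (hloc : IsStarLocal R 𝒜 m) (hP : ConditionP R 𝒜 m)
    (hdR : mDepth R m R = 0)
    (M : Type) [AddCommGroup M] [Module R M] [Module.Finite R M]
    (ℳ : ℤ → AddSubgroup M) [SetLike.GradedSMul 𝒜 ℳ] [DirectSum.Decomposition ℳ]
    (h : Subsingleton (Module.Dual R M)) :
    Subsingleton M := by
  obtain ⟨⟨hm_hom, hm_ne_top0, hm_max⟩, hstar⟩ := hloc
  have hdR' : sSup {n : ℕ∞ | ∃ rs : List R, (∀ x ∈ rs, x ∈ m) ∧
      RingTheory.Sequence.IsRegular R rs ∧ n = rs.length} = 0 := hdR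
  by_contra hM
  have hMnt : Nontrivial M := not_subsingleton_iff_nontrivial.mp hM
  have hRnt : Nontrivial R := by
    by_contra hR
    haveI : Subsingleton R := not_nontrivial_iff_subsingleton.mp hR
    exact hM (Module.subsingleton R M)
  have hm_ne_top : m ≠ ⊤ := hm_ne_top0
  -- every element of m is a zerodivisor
  have hzd : ∀ x ∈ m, ∃ y : R, y ≠ 0 ∧ x * y = 0 := by
    intro x hx
    by_contra hcon
    push_neg at hcon
    have hreg : IsSMulRegular R x := by
      intro y z hyz
      by_contra hne
      refine hcon (y - z) (sub_ne_zero.mpr hne) ?_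
      have : x * y = x * z := hyz
      rw [mul_sub, this, sub_self]
    have hxreg : RingTheory.Sequence.IsRegular R [x] := by
      refine { toIsWeaklyRegular := ?_, top_ne_smul := ?_ }
      · exact RingTheory.Sequence.IsWeaklyRegular.cons hreg (RingTheory.Sequence.IsWeaklyRegular.nil _ _)
      · intro hEq
        have h1 : (1 : R) ∈ (Ideal.ofList [x] • (⊤ : Submodule R R) : Submodule R R) := by
          rw [← hEq]; trivial
        have hle : (Ideal.ofList [x] • (⊤ : Submodule R R) : Submodule R R) ≤ Ideal.ofList [x] := by
          refine Submodule.smul_le.mpr ?_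
          intro a ha n _
          exact Ideal.mul_mem_right n _ ha
        have h2 : (1 : R) ∈ Ideal.ofList [x] := hle h1
        have h3 : Ideal.ofList [x] ≤ m := by
          rw [Ideal.ofList_singleton, Ideal.span_le]
          simpa using hx
        exact hm_ne_top (Ideal.eq_top_iff_one m |>.mpr (h3 h2))
    have h1 : (1 : ℕ∞) ∈ {n : ℕ∞ | ∃ rs : List R, (∀ x ∈ rs, x ∈ m) ∧
        RingTheory.Sequence.IsRegular R rs ∧ n = rs.length} :=
      ⟨[x], by simpa using hx, hxreg, by simp⟩
    have h2 := le_sSup h1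
    rw [hdR'] at h2
    simp at h2
  obtain ⟨s, hs0, hss⟩ := exists_socle m hm_ne_top hzd
  -- maximal homogeneous proper submodule
  haveI : IsNoetherian R M := isNoetherian_of_isNoetherianRing_of_finite R M
  have hbot : SubmoduleIsHomog ℳ (⊥ : Submodule R M) := by
    intro i x hx
    rw [Submodule.mem_bot] at hx
    subst hx
    simp
  have hbotne : (⊥ : Submodule R M) ≠ ⊤ := by
    intro hEq
    obtain ⟨a, b, hab⟩ := hMnt
    apply hab
    have ha : a ∈ (⊥ : Submodule R M) := hEq ▸ Submodule.mem_top
    have hb : b ∈ (⊥ : Submodule R M) := hEq ▸ Submodule.mem_top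
    rw [Submodule.mem_bot] at ha hb
    rw [ha, hb]
  obtain ⟨N, hNmem, hNmax⟩ := (set_has_maximal_iff_noetherian.mpr (inferInstance : IsNoetherian R M))
    {N : Submodule R M | SubmoduleIsHomog ℳ N ∧ N ≠ ⊤} ⟨⊥, hbot, hbotne⟩
  obtain ⟨hNh, hNt⟩ := hNmem
  obtain ⟨x, hxN⟩ : ∃ x, x ∉ N := by
    by_contra hcon
    push_neg at hcon
    exact hNt (Submodule.eq_top_iff'.mpr hcon)
  obtain ⟨d, w, hw, hwN⟩ := exists_homog_not_mem ℳ hNh hxN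
  have hsup : N ⊔ Submodule.span R {w} = ⊤ := by
    by_contra hne
    have hhom := homog_sup ℳ hNh (homog_span_singleton ℳ 𝒜 hw)
    have hlt : N < N ⊔ Submodule.span R {w} := by
      refine lt_of_le_of_ne le_sup_left ?_
      intro hEq
      exact hwN (hEq ▸ (le_sup_right : Submodule.span R {w} ≤ _) (Submodule.mem_span_singleton_self w))
    exact hNmax _ ⟨hhom, hne⟩ hlt
  set I : Ideal R := Submodule.comap (LinearMap.toSpanSingleton R M w) N with hI
  have hIhom : Ideal.IsHomogeneous 𝒜 I := homog_comap_ideal 𝒜 ℳ hNh hw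
  have hIne : I ≠ ⊤ := by
    intro hEq
    apply hwN
    have h1 : (1 : R) ∈ I := hEq ▸ Submodule.mem_top
    have h2 : (1 : R) • w ∈ N := h1
    rwa [one_smul] at h2
  have hIm : I ≤ m := by
    obtain ⟨J, hJh, hJt, hIJ, hJmax⟩ := proper_homog_le_star_max 𝒜 hIhom hIne
    have := hstar J ⟨hJh, hJt, hJmax⟩
    rw [← this]
    exact hIJ
  set α : R →ₗ[R] M ⧸ N := N.mkQ.comp (LinearMap.toSpanSingleton R M w) with hα
  have hαsurj : Function.Surjective α := by
    rw [← LinearMap.range_eq_top, hα, LinearMap.range_comp,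
      ← LinearMap.span_singleton_eq_range, Submodule.map_mkQ_eq_top]
    exact hsup
  set β : R →ₗ[R] R := LinearMap.toSpanSingleton R R s with hβ
  have hker : LinearMap.ker α ≤ LinearMap.ker β := by
    intro a ha
    rw [LinearMap.mem_ker] at ha ⊢
    have haI : a ∈ I := by
      have h2 : N.mkQ (a • w) = 0 := by
        rw [hα] at ha
        simpa using ha
      exact (Submodule.Quotient.mk_eq_zero N).mp h2
    have ham : a ∈ m := hIm haI
    rw [hβ, LinearMap.toSpanSingleton_apply, smul_eq_mul]
    exact hss a ham
  set e := LinearMap.quotKerEquivOfSurjective α hαsurj with he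
  set χ : (M ⧸ N) →ₗ[R] R :=
    (Submodule.liftQ (LinearMap.ker α) β hker).comp (e.symm : (M ⧸ N) →ₗ[R] _) with hχ
  set φ : M →ₗ[R] R := χ.comp N.mkQ with hφdef
  have h1 : e (Submodule.Quotient.mk (1 : R)) = N.mkQ w := by
    show (LinearMap.quotKerEquivOfSurjective α hαsurj) (Submodule.Quotient.mk (1 : R)) = N.mkQ w
    have : α 1 = N.mkQ w := by
      rw [hα]; simp
    rw [← this]
    rfl
  have hφw : φ w = s := by
    rw [hφdef]
    simp only [LinearMap.comp_apply]
    rw [hχ]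
    simp only [LinearMap.comp_apply, LinearEquiv.coe_coe]
    have h2 : e.symm (N.mkQ w) = Submodule.Quotient.mk (1 : R) := by
      rw [← h1, LinearEquiv.symm_apply_apply]
    rw [h2, Submodule.liftQ_apply, hβ, LinearMap.toSpanSingleton_apply, one_smul]
  have hφ0 : (φ : Module.Dual R M) = 0 := Subsingleton.elim _ _
  apply hs0
  rw [← hφw]
  rw [show φ = (0 : Module.Dual R M) from hφ0]
  rfl


end
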